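/- Let n ≥ 53 and set d = 1, a_1 = -1, f(s) = a_0 + a_1 s, with a_0 = ((n+3)(n-6)/(2(n-7)(n-8)))·(3 + √(9 - 8(n-7)(n-8)²(n+7)/((n+3)(n-6)(n-9)(n-10)))). Define I(s) = Σ_{q=0}^{2} (α_q/(n-6-2q))·(∏_{j=0}^{q} (n-1+2j)/(n-5-2j))·s^{q+2}, where α_0 = (n+1)a_0², α_1 = 2(n+3)a_0 a_1, α_2 = (n+7)a_1². Then I'(1) = 0. -/

import Mathlib

open Finset

/-- For `n ≥ 53`, with `d = 1`, `a₁ = -1`, and the indicated choice of `a₀`, the auxiliary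
function `I(s) = Σ_{q=0}^{2} (α_q/(n-6-2q)) (∏_{j=0}^{q} (n-1+2j)/(n-5-2j)) s^{q+2}`
has a critical point at `s = 1`: `I'(1) = 0`. -/
theorem stmt_16 (n : ℕ) (hn : 53 ≤ n) :
    let N : ℝ := n
    let a1 : ℝ := -1
    let a0 : ℝ := (N + 3) * (N - 6) / (2 * (N - 7) * (N - 8)) *
      (3 + Real.sqrt (9 - 8 * (N - 7) * (N - 8) ^ 2 * (N + 7) /
        ((N + 3) * (N - 6) * (N - 9) * (N - 10))))
    let α : ℕ → ℝ := fun q =>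
      if q = 0 then (N + 1) * a0 ^ 2 else if q = 1 then 2 * (N + 3) * a0 * a1 else (N + 7) * a1 ^ 2
    let I : ℝ → ℝ := fun s => ∑ q ∈ Finset.range 3,
      (α q / (N - 6 - 2 * q)) * (∏ j ∈ Finset.range (q + 1), (N - 1 + 2 * j) / (N - 5 - 2 * j)) *
        s ^ (q + 2)
    deriv I 1 = 0 := by
  intro N a1 a0 α I
  have hN : (53:ℝ) ≤ N := by
    have : (53:ℝ) ≤ (n:ℝ) := by exact_mod_cast hn
    exact this
  have h3 : N + 3 > 0 := by linarith
  have h6 : N - 6 > 0 := by linarith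
  have h5 : N - 5 > 0 := by linarith
  have h7 : N - 7 > 0 := by linarith
  have h8 : N - 8 > 0 := by linarith
  have h9 : N - 9 > 0 := by linarith
  have h10 : N - 10 > 0 := by linarith
  have hp7 : N + 7 > 0 := by linarith
  have hD : (N + 3) * (N - 6) * (N - 9) * (N - 10) > 0 := by positivity
  have harg : 0 ≤ 9 - 8 * (N - 7) * (N - 8) ^ 2 * (N + 7) /
      ((N + 3) * (N - 6) * (N - 9) * (N - 10)) := by
    rw [sub_nonneg, div_le_iff₀ hD]
    nlinarith [sq_nonneg (N - 53), sq_nonneg ((N-53)*(N-53)), sq_nonneg ((N-53)*(N-54))]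
  set S : ℝ := Real.sqrt (9 - 8 * (N - 7) * (N - 8) ^ 2 * (N + 7) /
      ((N + 3) * (N - 6) * (N - 9) * (N - 10))) with hSdef
  have hS2 : S ^ 2 * ((N + 3) * (N - 6) * (N - 9) * (N - 10)) =
      9 * ((N + 3) * (N - 6) * (N - 9) * (N - 10)) - 8 * (N - 7) * (N - 8) ^ 2 * (N + 7) := by
    rw [hSdef, Real.sq_sqrt harg]
    field_simp
  have ha : 2 * (N - 7) * (N - 8) * a0 = (N + 3) * (N - 6) * (3 + S) := by
    show 2 * (N - 7) * (N - 8) * ((N + 3) * (N - 6) / (2 * (N - 7) * (N - 8)) * (3 + S)) = _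
    field_simp
  clear_value S
  clear hSdef harg
  clear_value a0
  -- the key quadratic identity satisfied by a0
  have key : a0 ^ 2 * ((N-7)*(N-8)*(N-9)*(N-10)) - 3*(N+3)*a0*((N-6)*(N-9)*(N-10))
      + 2*(N+3)*(N+7)*((N-6)*(N-8)) = 0 := by
    have h4 : (4:ℝ)*(N-7)*(N-8) ≠ 0 := by positivity
    have key4 : 4*(N-7)*(N-8) * (a0 ^ 2 * ((N-7)*(N-8)*(N-9)*(N-10))
        - 3*(N+3)*a0*((N-6)*(N-9)*(N-10)) + 2*(N+3)*(N+7)*((N-6)*(N-8)))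
        = 4*(N-7)*(N-8) * 0 := by
      rw [mul_zero]
      linear_combination ((N-9)*(N-10)*(2*(N-7)*(N-8)*a0 + (N+3)*(N-6)*(3+S)
        - 6*(N+3)*(N-6))) * ha + ((N+3)*(N-6)) * hS2
    exact mul_left_cancel₀ h4 key4
  -- compute the derivative
  have hI : I = fun s : ℝ =>
      ((N + 1) * a0 ^ 2 / (N - 6) * ((N - 1) / (N - 5))) * s ^ 2
      + (2 * (N + 3) * a0 * (-1) / (N - 8) * ((N - 1) / (N - 5) * ((N + 1) / (N - 7)))) * s ^ 3
      + ((N + 7) * (-1 : ℝ) ^ 2 / (N - 10) *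
          ((N - 1) / (N - 5) * ((N + 1) / (N - 7)) * ((N + 3) / (N - 9)))) * s ^ 4 := by
    funext s
    show (∑ q ∈ Finset.range 3,
      (α q / (N - 6 - 2 * q)) * (∏ j ∈ Finset.range (q + 1), (N - 1 + 2 * j) / (N - 5 - 2 * j)) *
        s ^ (q + 2)) = _
    simp only [Finset.sum_range_succ, Finset.sum_range_zero, Finset.prod_range_succ,
      Finset.prod_range_zero,
      show α 0 = (N + 1) * a0 ^ 2 from rfl,
      show α 1 = 2 * (N + 3) * a0 * a1 from rfl,
      show α 2 = (N + 7) * a1 ^ 2 from rfl,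
      show a1 = -1 from rfl]
    push_cast
    ring
  rw [hI]
  have hd : HasDerivAt (fun s : ℝ =>
      ((N + 1) * a0 ^ 2 / (N - 6) * ((N - 1) / (N - 5))) * s ^ 2
      + (2 * (N + 3) * a0 * (-1) / (N - 8) * ((N - 1) / (N - 5) * ((N + 1) / (N - 7)))) * s ^ 3
      + ((N + 7) * (-1 : ℝ) ^ 2 / (N - 10) *
          ((N - 1) / (N - 5) * ((N + 1) / (N - 7)) * ((N + 3) / (N - 9)))) * s ^ 4)
      (((N + 1) * a0 ^ 2 / (N - 6) * ((N - 1) / (N - 5))) * (2 * 1 ^ 1)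
      + (2 * (N + 3) * a0 * (-1) / (N - 8) * ((N - 1) / (N - 5) * ((N + 1) / (N - 7)))) * (3 * 1 ^ 2)
      + ((N + 7) * (-1 : ℝ) ^ 2 / (N - 10) *
          ((N - 1) / (N - 5) * ((N + 1) / (N - 7)) * ((N + 3) / (N - 9)))) * (4 * 1 ^ 3)) 1 := by
    have p2 := (hasDerivAt_pow 2 (1:ℝ)).const_mul
      ((N + 1) * a0 ^ 2 / (N - 6) * ((N - 1) / (N - 5)))
    have p3 := (hasDerivAt_pow 3 (1:ℝ)).const_mul
      (2 * (N + 3) * a0 * (-1) / (N - 8) * ((N - 1) / (N - 5) * ((N + 1) / (N - 7))))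
    have p4 := (hasDerivAt_pow 4 (1:ℝ)).const_mul
      ((N + 7) * (-1 : ℝ) ^ 2 / (N - 10) *
        ((N - 1) / (N - 5) * ((N + 1) / (N - 7)) * ((N + 3) / (N - 9))))
    have h := (p2.add p3).add p4
    exact h.congr_deriv (by norm_num)
  rw [hd.deriv]
  have h5' : N - 5 ≠ 0 := ne_of_gt h5
  have h6' : N - 6 ≠ 0 := ne_of_gt h6
  have h7' : N - 7 ≠ 0 := ne_of_gt h7
  have h8' : N - 8 ≠ 0 := ne_of_gt h8
  have h9' : N - 9 ≠ 0 := ne_of_gt h9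
  have h10' : N - 10 ≠ 0 := ne_of_gt h10
  field_simp
  linear_combination (2*N^2 - 2) * key
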